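/- For √2/4 < t < 1/√5 and x₀ = −1/(2√3 t), the difference f(x₀) − f(√(2/3)) = (√2 − 2t)(√2 + 4t)²(−13√2 + 78t + 48√2 t² + 16t³)/1024 is strictly positive, where f(b₁) = (1 − √3 b₁ t)²(1 + (√3/2)b₁ t)²(1 + √3 b₁ t + 3b₁²t² − (3/2)t²). -/

import Mathlib

set_option maxHeartbeats 1000000 in
theorem stmt_10 (t : ℝ) (ht0 : Real.sqrt 2 / 4 < t) (ht1 : t < 1 / Real.sqrt 5)
    (f : ℝ → ℝ)
    (hf : ∀ b, f b = (1 - Real.sqrt 3 * b * t) ^ 2 * (1 + (Real.sqrt 3 / 2) * b * t) ^ 2 *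
      (1 + Real.sqrt 3 * b * t + 3 * b ^ 2 * t ^ 2 - (3 / 2) * t ^ 2)) :
    f (-(1 / (2 * Real.sqrt 3 * t))) - f (Real.sqrt (2 / 3))
        = (Real.sqrt 2 - 2 * t) * (Real.sqrt 2 + 4 * t) ^ 2 *
          (-13 * Real.sqrt 2 + 78 * t + 48 * Real.sqrt 2 * t ^ 2 + 16 * t ^ 3) / 1024 ∧
      0 < f (-(1 / (2 * Real.sqrt 3 * t))) - f (Real.sqrt (2 / 3)) := by
  have hc : Real.sqrt 2 ^ 2 = 2 := Real.sq_sqrt (by norm_num)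
  have hcpos : 0 < Real.sqrt 2 := Real.sqrt_pos.mpr (by norm_num)
  have h3 : Real.sqrt 3 ^ 2 = 3 := Real.sq_sqrt (by norm_num)
  have h3pos : 0 < Real.sqrt 3 := Real.sqrt_pos.mpr (by norm_num)
  have htpos : 0 < t := lt_trans (by positivity) ht0
  have h3ne : Real.sqrt 3 ≠ 0 := ne_of_gt h3pos
  have htne : t ≠ 0 := ne_of_gt htpos
  have e1 : Real.sqrt 3 * -(1 / (2 * Real.sqrt 3 * t)) * t = -(1/2) := by
    field_simp
  have e1' : Real.sqrt 3 / 2 * -(1 / (2 * Real.sqrt 3 * t)) * t = -(1/4) := by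
    field_simp; ring
  have e2 : 3 * (-(1 / (2 * Real.sqrt 3 * t))) ^ 2 * t ^ 2 = 1/4 := by
    field_simp
    linear_combination (-4) * h3
  have e3 : Real.sqrt 3 * Real.sqrt (2/3) = Real.sqrt 2 := by
    rw [← Real.sqrt_mul (by norm_num : (3:ℝ) ≥ 0)]
    norm_num
  have e3' : Real.sqrt 3 / 2 * Real.sqrt (2/3) * t = Real.sqrt 2 / 2 * t := by
    rw [div_mul_eq_mul_div, e3]
  have e4 : 3 * Real.sqrt (2/3) ^ 2 * t ^ 2 = 2 * t ^ 2 := by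
    rw [Real.sq_sqrt (by norm_num : (0:ℝ) ≤ 2/3)]; ring
  have key : f (-(1 / (2 * Real.sqrt 3 * t))) - f (Real.sqrt (2 / 3))
      = (Real.sqrt 2 - 2 * t) * (Real.sqrt 2 + 4 * t) ^ 2 *
        (-13 * Real.sqrt 2 + 78 * t + 48 * Real.sqrt 2 * t ^ 2 + 16 * t ^ 3) / 1024 := by
    rw [hf, hf, e1, e1', e2, e3', e4, e3]
    set c := Real.sqrt 2
    linear_combination ((-1/4)*t^5*c^3 + (-3/4)*t^4*c^2 + (-1/8)*t^6*c^2 + (13/1024)*c^2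
      + (-3/64)*t^2*c^2 + (-3/64)*t^3*c + (-3/4)*t^5*c + (307/256)*t^2 + (-39/32)*t^4
      + (-1/4)*t^6 + 13/512) * hc
  refine ⟨key, ?_⟩
  rw [key]
  have h5 : (2:ℝ) < Real.sqrt 5 := by
    nlinarith [Real.sq_sqrt (by norm_num : (0:ℝ) ≤ 5), Real.sqrt_pos.mpr (by norm_num : (0:ℝ) < 5)]
  have h5pos : (0:ℝ) < Real.sqrt 5 := by linarith
  have hc14 : (1.4 : ℝ) < Real.sqrt 2 := by nlinarith
  have ht1' : t < 1/2 := by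
    rw [lt_div_iff₀ h5pos] at ht1
    nlinarith
  have hA : 0 < Real.sqrt 2 - 2 * t := by nlinarith
  have hB : 0 < (Real.sqrt 2 + 4 * t) ^ 2 := by positivity
  have hC : 0 < -13 * Real.sqrt 2 + 78 * t + 48 * Real.sqrt 2 * t ^ 2 + 16 * t ^ 3 := by
    have h1 : Real.sqrt 2 / 4 < t := ht0
    have ht2 : (1:ℝ)/8 < t ^ 2 := by nlinarith
    have hct2 : 6 * Real.sqrt 2 < 48 * Real.sqrt 2 * t ^ 2 := by
      nlinarith [mul_pos hcpos (sub_pos.mpr ht2)]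
    have ht3 : 0 < t ^ 3 := by positivity
    linarith
  have := mul_pos (mul_pos hA hB) hC
  linarith
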